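/- C²[a,b] is a differential subalgebra of order 1/2 in C[a,b]: there exists D₀ > 0 such that for all f, g ∈ C²[a,b], ‖fg‖_{C²} ≤ D₀ ‖f‖_{C²} ‖g‖_{C²} ((‖f‖_{C⁰}/‖f‖_{C²})^{1/2} + (‖g‖_{C⁰}/‖g‖_{C²})^{1/2}). -/

import Mathlib

open Set

noncomputable def normC0 (a b : ℝ) (f : ℝ → ℝ) : ℝ :=
  ⨆ t : Icc a b, |f t.1|

noncomputable def normC2 (a b : ℝ) (f : ℝ → ℝ) : ℝ :=
  normC0 a b f + normC0 a b (derivWithin f (Icc a b)) +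
    normC0 a b (derivWithin (derivWithin f (Icc a b)) (Icc a b))

lemma normC0_nonneg (a b : ℝ) (f : ℝ → ℝ) : 0 ≤ normC0 a b f :=
  Real.iSup_nonneg fun t => abs_nonneg _

lemma normC0_le (a b : ℝ) (f : ℝ → ℝ) {M : ℝ} (hM : 0 ≤ M)
    (h : ∀ x ∈ Icc a b, |f x| ≤ M) : normC0 a b f ≤ M :=
  Real.iSup_le (fun t => h t.1 t.2) hM

lemma le_normC0 (a b : ℝ) (f : ℝ → ℝ) (hf : ContinuousOn f (Icc a b))
    {x : ℝ} (hx : x ∈ Icc a b) : |f x| ≤ normC0 a b f := by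
  have hbdd : BddAbove (Set.range fun t : Icc a b => |f t.1|) := by
    have h1 : (fun t : Icc a b => |f t.1|) = (fun y => |f y|) ∘ (fun t : Icc a b => t.1) := rfl
    rw [h1, Set.range_comp, Subtype.range_coe]
    exact (isCompact_Icc.image_of_continuousOn hf.abs).bddAbove
  exact le_ciSup hbdd ⟨x, hx⟩

lemma normC2_nonneg (a b : ℝ) (f : ℝ → ℝ) : 0 ≤ normC2 a b f := by
  have := normC0_nonneg a b f
  have := normC0_nonneg a b (derivWithin f (Icc a b))
  have := normC0_nonneg a b (derivWithin (derivWithin f (Icc a b)) (Icc a b))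
  unfold normC2; linarith

section
variable {a b : ℝ} (hab : a < b) {f : ℝ → ℝ} (hf : ContDiffOn ℝ 2 f (Icc a b))
include hab hf

lemma d1_contDiffOn : ContDiffOn ℝ 1 (derivWithin f (Icc a b)) (Icc a b) :=
  hf.derivWithin (uniqueDiffOn_Icc hab) (by norm_num)

lemma d2_continuousOn :
    ContinuousOn (derivWithin (derivWithin f (Icc a b)) (Icc a b)) (Icc a b) :=
  (d1_contDiffOn hab hf).continuousOn_derivWithin (uniqueDiffOn_Icc hab) le_rfl

lemma landau_pointwise {x h : ℝ} (hx : x ∈ Icc a b) (hh : 0 < h) (hhb : h ≤ b - a) :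
    |derivWithin f (Icc a b) x| ≤
      2 * normC0 a b f / h + normC0 a b (derivWithin (derivWithin f (Icc a b)) (Icc a b)) * h := by
  set F0 := normC0 a b f
  set F2 := normC0 a b (derivWithin (derivWithin f (Icc a b)) (Icc a b))
  obtain ⟨hax, hxb⟩ := hx
  set c : ℝ := if x + h ≤ b then x else b - h with hc
  have hca : a ≤ c := by
    rw [hc]; split_ifs with h1
    · exact hax
    · linarith
  have hcb : c + h ≤ b := by
    rw [hc]; split_ifs with h1
    · exact h1
    · linarith
  have hxc : c ≤ x := by
    rw [hc]; split_ifs with h1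
    · exact le_rfl
    · push_neg at h1; linarith
  have hxch : x ≤ c + h := by
    rw [hc]; split_ifs with h1
    · linarith
    · linarith
  have hsub : Icc c (c + h) ⊆ Icc a b := Icc_subset_Icc hca hcb
  have hIoo : Ioo c (c + h) ⊆ Ioo a b := Ioo_subset_Ioo hca hcb
  -- MVT
  have hcont : ContinuousOn f (Icc c (c + h)) := hf.continuousOn.mono hsub
  have hderiv : ∀ y ∈ Ioo c (c + h), HasDerivAt f (deriv f y) y := by
    intro y hy
    have hyo : y ∈ Ioo a b := hIoo hy
    have hnhds : Icc a b ∈ nhds y := Icc_mem_nhds hyo.1 hyo.2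
    have := (hf.differentiableOn (by norm_num) y (hsub (Ioo_subset_Icc_self hy))).differentiableAt hnhds
    exact this.hasDerivAt
  obtain ⟨ξ, hξ, hξeq⟩ := exists_hasDerivAt_eq_slope f (deriv f) (by linarith) hcont hderiv
  have hξI : ξ ∈ Icc a b := hsub (Ioo_subset_Icc_self hξ)
  have hξd : derivWithin f (Icc a b) ξ = deriv f ξ := by
    have hyo : ξ ∈ Ioo a b := hIoo hξ
    exact derivWithin_of_mem_nhds (Icc_mem_nhds hyo.1 hyo.2)
  -- bound at ξ
  have hξbound : |derivWithin f (Icc a b) ξ| ≤ 2 * F0 / h := by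
    rw [hξd, hξeq]
    have h1 : |f (c + h)| ≤ F0 := le_normC0 a b f hf.continuousOn (hsub (right_mem_Icc.2 (by linarith)))
    have h2 : |f c| ≤ F0 := le_normC0 a b f hf.continuousOn (hsub (left_mem_Icc.2 (by linarith)))
    rw [abs_div]
    rw [abs_of_pos (by linarith : (0:ℝ) < c + h - c)]
    rw [div_le_div_iff₀ (by linarith) hh]
    have := abs_sub (f (c + h)) (f c)
    calc |f (c + h) - f c| * h ≤ (|f (c + h)| + |f c|) * h := by
          apply mul_le_mul_of_nonneg_right (abs_sub _ _) hh.le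
      _ ≤ 2 * F0 * (c + h - c) := by ring_nf; nlinarith
  -- Lipschitz bound for f'
  have hf'diff : DifferentiableOn ℝ (derivWithin f (Icc a b)) (Icc a b) :=
    (d1_contDiffOn hab hf).differentiableOn one_ne_zero
  have hbound : ∀ y ∈ Icc a b, ‖derivWithin (derivWithin f (Icc a b)) (Icc a b) y‖ ≤ F2 := by
    intro y hy
    exact le_normC0 a b _ (d2_continuousOn hab hf) hy
  have hlip := (convex_Icc a b).norm_image_sub_le_of_norm_derivWithin_le hf'diff hbound hξI ⟨hax, hxb⟩
  have hdist : |x - ξ| ≤ h := by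
    rw [abs_le]; constructor
    · linarith [hξ.2]
    · linarith [hξ.1]
  have : |derivWithin f (Icc a b) x - derivWithin f (Icc a b) ξ| ≤ F2 * h := by
    calc |derivWithin f (Icc a b) x - derivWithin f (Icc a b) ξ| ≤ F2 * |x - ξ| := hlip
      _ ≤ F2 * h := mul_le_mul_of_nonneg_left hdist (normC0_nonneg a b _)
  calc |derivWithin f (Icc a b) x|
      ≤ |derivWithin f (Icc a b) ξ| + |derivWithin f (Icc a b) x - derivWithin f (Icc a b) ξ| := by
        have := abs_sub_abs_le_abs_sub (derivWithin f (Icc a b) x) (derivWithin f (Icc a b) ξ)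
        linarith [abs_nonneg (derivWithin f (Icc a b) x - derivWithin f (Icc a b) ξ)]
    _ ≤ 2 * F0 / h + F2 * h := add_le_add hξbound this

end

section
variable {a b : ℝ} (hab : a < b) {f : ℝ → ℝ} (hf : ContDiffOn ℝ 2 f (Icc a b))
include hab hf

lemma landau : normC0 a b (derivWithin f (Icc a b)) ≤
    (2 / (b - a) + (b - a)) * Real.sqrt (normC0 a b f * normC2 a b f) := by
  set F0 := normC0 a b f with hF0
  set F1 := normC0 a b (derivWithin f (Icc a b)) with hF1
  set F2 := normC0 a b (derivWithin (derivWithin f (Icc a b)) (Icc a b)) with hF2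
  have hF0n : 0 ≤ F0 := normC0_nonneg a b f
  have hF1n : 0 ≤ F1 := normC0_nonneg a b _
  have hF2n : 0 ≤ F2 := normC0_nonneg a b _
  have hFeq : normC2 a b f = F0 + F1 + F2 := rfl
  set F := normC2 a b f with hF
  have hKpos : (0:ℝ) < 2 / (b - a) + (b - a) :=
    add_pos (div_pos two_pos (by linarith)) (by linarith)
  have hstep : ∀ h : ℝ, 0 < h → h ≤ b - a → F1 ≤ 2 * F0 / h + F2 * h := by
    intro h hh hhb
    apply normC0_le a b _ (by positivity)
    intro x hx
    exact landau_pointwise hab hf hx hh hhb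
  rcases eq_or_lt_of_le hF0n with h0 | h0
  · -- F0 = 0
    have hF10 : F1 ≤ 0 := by
      by_contra hcon
      push_neg at hcon
      set ε := F1 / 2 with hε
      have hεpos : 0 < ε := by positivity
      set h := min (b - a) (ε / (F2 + 1)) with hhdef
      have hhpos : 0 < h := lt_min (by linarith) (by positivity)
      have := hstep h hhpos (min_le_left _ _)
      have hhle : h ≤ ε / (F2 + 1) := min_le_right _ _
      have : F1 ≤ F2 * h := by rw [← h0] at this; simpa using this
      have hF2h : F2 * h ≤ ε := by
        calc F2 * h ≤ F2 * (ε / (F2 + 1)) := mul_le_mul_of_nonneg_left hhle hF2n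
          _ ≤ ε := by rw [mul_comm, div_mul_eq_mul_div, div_le_iff₀ (by linarith)]; nlinarith
      linarith
    have : F1 = 0 := le_antisymm hF10 hF1n
    rw [this]
    positivity
  · -- F0 > 0
    have hFpos : 0 < F := by rw [hFeq]; linarith
    set s0 := Real.sqrt F0 with hs0
    set s := Real.sqrt F with hs
    have hs0pos : 0 < s0 := Real.sqrt_pos.mpr h0
    have hspos : 0 < s := Real.sqrt_pos.mpr hFpos
    have hs0sq : s0 ^ 2 = F0 := Real.sq_sqrt hF0n
    have hssq : s ^ 2 = F := Real.sq_sqrt hFpos.le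
    have hsqrtdiv : Real.sqrt (F0 / F) = s0 / s := Real.sqrt_div hF0n F
    have hsqrtmul : Real.sqrt (F0 * F) = s0 * s := Real.sqrt_mul hF0n F
    set h := (b - a) * (s0 / s) with hh
    have hhpos : 0 < h := by
      rw [hh]
      exact mul_pos (by linarith) (div_pos hs0pos hspos)
    have hs0les : s0 ≤ s := Real.sqrt_le_sqrt (by rw [hFeq]; linarith)
    have hhb : h ≤ b - a := by
      rw [hh]
      nth_rewrite 2 [← mul_one (b - a)]
      apply mul_le_mul_of_nonneg_left _ (by linarith)
      rw [div_le_one hspos]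
      exact hs0les
    have hmain := hstep h hhpos hhb
    have hba : b - a ≠ 0 := ne_of_gt (by linarith)
    have hsne : s ≠ 0 := ne_of_gt hspos
    have hs0ne : s0 ≠ 0 := ne_of_gt hs0pos
    have hp1 : s * b - s * a ≠ 0 := by
      have : s * (b - a) ≠ 0 := mul_ne_zero hsne hba
      simpa [mul_sub] using this
    have hp2 : s0 * b - s0 * a ≠ 0 := by
      have : s0 * (b - a) ≠ 0 := mul_ne_zero hs0ne hba
      simpa [mul_sub] using this
    have e1 : 2 * F0 / h = 2 / (b - a) * (s0 * s) := by
      rw [hh, ← hs0sq]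
      field_simp
    have e2 : F2 * h ≤ (b - a) * (s0 * s) := by
      have hF2F : F2 ≤ s * s := by nlinarith [hssq]
      have h1 : F2 / s ≤ s := (div_le_iff₀ hspos).mpr hF2F
      have h2 : F2 * h = (b - a) * (s0 * (F2 / s)) := by rw [hh]; ring
      rw [h2]
      exact mul_le_mul_of_nonneg_left (mul_le_mul_of_nonneg_left h1 hs0pos.le) (by linarith)
    rw [hsqrtmul]
    calc F1 ≤ 2 * F0 / h + F2 * h := hmain
      _ ≤ 2 / (b - a) * (s0 * s) + (b - a) * (s0 * s) := by rw [e1]; linarith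
      _ = (2 / (b - a) + (b - a)) * (s0 * s) := by ring

end

section
variable {a b : ℝ} (hab : a < b) {f g : ℝ → ℝ}
  (hf : ContDiffOn ℝ 2 f (Icc a b)) (hg : ContDiffOn ℝ 2 g (Icc a b))
include hab hf hg

lemma deriv1_mul {x : ℝ} (hx : x ∈ Icc a b) :
    derivWithin (f * g) (Icc a b) x =
      derivWithin f (Icc a b) x * g x + f x * derivWithin g (Icc a b) x :=
  derivWithin_mul
    (hf.differentiableOn two_ne_zero x hx) (hg.differentiableOn two_ne_zero x hx)

lemma deriv2_mul {x : ℝ} (hx : x ∈ Icc a b) :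
    derivWithin (derivWithin (f * g) (Icc a b)) (Icc a b) x =
      derivWithin (derivWithin f (Icc a b)) (Icc a b) x * g x +
      2 * (derivWithin f (Icc a b) x * derivWithin g (Icc a b) x) +
      f x * derivWithin (derivWithin g (Icc a b)) (Icc a b) x := by
  have hfd : DifferentiableWithinAt ℝ f (Icc a b) x := hf.differentiableOn two_ne_zero x hx
  have hgd : DifferentiableWithinAt ℝ g (Icc a b) x := hg.differentiableOn two_ne_zero x hx
  have hf'd : DifferentiableWithinAt ℝ (derivWithin f (Icc a b)) (Icc a b) x :=
    (d1_contDiffOn hab hf).differentiableOn one_ne_zero x hx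
  have hg'd : DifferentiableWithinAt ℝ (derivWithin g (Icc a b)) (Icc a b) x :=
    (d1_contDiffOn hab hg).differentiableOn one_ne_zero x hx
  have hud : UniqueDiffWithinAt ℝ (Icc a b) x := uniqueDiffOn_Icc hab x hx
  have hcongr : derivWithin (derivWithin (f * g) (Icc a b)) (Icc a b) x =
      derivWithin (fun y => derivWithin f (Icc a b) y * g y + f y * derivWithin g (Icc a b) y)
        (Icc a b) x := by
    apply derivWithin_congr
    · intro y hy; exact deriv1_mul hab hf hg hy
    · exact deriv1_mul hab hf hg hx
  rw [hcongr]
  rw [derivWithin_fun_add (hf'd.fun_mul hgd) (hfd.fun_mul hg'd),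
    derivWithin_fun_mul hf'd hgd, derivWithin_fun_mul hfd hg'd]
  ring

lemma normC2_mul_le :
    normC2 a b (f * g) ≤
      normC2 a b f * normC0 a b g + normC0 a b f * normC2 a b g +
        2 * (normC0 a b (derivWithin f (Icc a b)) * normC0 a b (derivWithin g (Icc a b))) := by
  set F0 := normC0 a b f
  set F1 := normC0 a b (derivWithin f (Icc a b))
  set F2 := normC0 a b (derivWithin (derivWithin f (Icc a b)) (Icc a b))
  set G0 := normC0 a b g
  set G1 := normC0 a b (derivWithin g (Icc a b))
  set G2 := normC0 a b (derivWithin (derivWithin g (Icc a b)) (Icc a b))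
  have hF0n : 0 ≤ F0 := normC0_nonneg a b _
  have hF1n : 0 ≤ F1 := normC0_nonneg a b _
  have hF2n : 0 ≤ F2 := normC0_nonneg a b _
  have hG0n : 0 ≤ G0 := normC0_nonneg a b _
  have hG1n : 0 ≤ G1 := normC0_nonneg a b _
  have hG2n : 0 ≤ G2 := normC0_nonneg a b _
  have hfc := hf.continuousOn
  have hgc := hg.continuousOn
  have hf1c : ContinuousOn (derivWithin f (Icc a b)) (Icc a b) := (d1_contDiffOn hab hf).continuousOn
  have hg1c : ContinuousOn (derivWithin g (Icc a b)) (Icc a b) := (d1_contDiffOn hab hg).continuousOn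
  have hf2c := d2_continuousOn hab hf
  have hg2c := d2_continuousOn hab hg
  have h0 : normC0 a b (f * g) ≤ F0 * G0 := by
    apply normC0_le a b _ (by positivity)
    intro x hx
    rw [Pi.mul_apply, abs_mul]
    exact mul_le_mul (le_normC0 a b f hfc hx) (le_normC0 a b g hgc hx) (abs_nonneg _) hF0n
  have h1 : normC0 a b (derivWithin (f * g) (Icc a b)) ≤ F1 * G0 + F0 * G1 := by
    apply normC0_le a b _ (by positivity)
    intro x hx
    rw [deriv1_mul hab hf hg hx]
    calc |derivWithin f (Icc a b) x * g x + f x * derivWithin g (Icc a b) x|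
        ≤ |derivWithin f (Icc a b) x * g x| + |f x * derivWithin g (Icc a b) x| := abs_add_le _ _
      _ ≤ F1 * G0 + F0 * G1 := by
          rw [abs_mul, abs_mul]
          exact add_le_add
            (mul_le_mul (le_normC0 a b _ hf1c hx) (le_normC0 a b g hgc hx) (abs_nonneg _) hF1n)
            (mul_le_mul (le_normC0 a b f hfc hx) (le_normC0 a b _ hg1c hx) (abs_nonneg _) hF0n)
  have h2 : normC0 a b (derivWithin (derivWithin (f * g) (Icc a b)) (Icc a b)) ≤
      F2 * G0 + 2 * (F1 * G1) + F0 * G2 := by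
    apply normC0_le a b _ (by positivity)
    intro x hx
    rw [deriv2_mul hab hf hg hx]
    have e1 : |derivWithin (derivWithin f (Icc a b)) (Icc a b) x * g x| ≤ F2 * G0 := by
      rw [abs_mul]
      exact mul_le_mul (le_normC0 a b _ hf2c hx) (le_normC0 a b g hgc hx) (abs_nonneg _) hF2n
    have e2 : |2 * (derivWithin f (Icc a b) x * derivWithin g (Icc a b) x)| ≤ 2 * (F1 * G1) := by
      rw [abs_mul, abs_mul, abs_two]
      apply mul_le_mul_of_nonneg_left _ (by norm_num)
      exact mul_le_mul (le_normC0 a b _ hf1c hx) (le_normC0 a b _ hg1c hx) (abs_nonneg _) hF1n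
    have e3 : |f x * derivWithin (derivWithin g (Icc a b)) (Icc a b) x| ≤ F0 * G2 := by
      rw [abs_mul]
      exact mul_le_mul (le_normC0 a b f hfc hx) (le_normC0 a b _ hg2c hx) (abs_nonneg _) hF0n
    calc |_ + _ + _| ≤ |derivWithin (derivWithin f (Icc a b)) (Icc a b) x * g x +
            2 * (derivWithin f (Icc a b) x * derivWithin g (Icc a b) x)| +
            |f x * derivWithin (derivWithin g (Icc a b)) (Icc a b) x| := abs_add_le _ _
      _ ≤ _ := by
          have := abs_add_le (derivWithin (derivWithin f (Icc a b)) (Icc a b) x * g x)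
            (2 * (derivWithin f (Icc a b) x * derivWithin g (Icc a b) x))
          linarith
  have : normC2 a b (f * g) = normC0 a b (f * g) + normC0 a b (derivWithin (f * g) (Icc a b)) +
      normC0 a b (derivWithin (derivWithin (f * g) (Icc a b)) (Icc a b)) := rfl
  rw [this]
  have hFeq : normC2 a b f = F0 + F1 + F2 := rfl
  have hGeq : normC2 a b g = G0 + G1 + G2 := rfl
  rw [hFeq, hGeq]
  nlinarith [h0, h1, h2]

end

set_option maxHeartbeats 2000000 in
theorem stmt3 (a b : ℝ) (hab : a < b) :
    ∃ D₀ : ℝ, 0 < D₀ ∧ ∀ f g : ℝ → ℝ,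
      ContDiffOn ℝ 2 f (Icc a b) → ContDiffOn ℝ 2 g (Icc a b) →
      normC2 a b f ≠ 0 → normC2 a b g ≠ 0 →
      normC2 a b (f * g) ≤ D₀ * normC2 a b f * normC2 a b g *
        (Real.sqrt (normC0 a b f / normC2 a b f) + Real.sqrt (normC0 a b g / normC2 a b g)) := by
  set K := 2 / (b - a) + (b - a) with hK
  have hKpos : 0 < K := add_pos (div_pos two_pos (by linarith)) (by linarith)
  refine ⟨1 + 2 * K ^ 2, by positivity, ?_⟩
  intro f g hf hg hFne hGne
  set F0 := normC0 a b f with hF0d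
  set G0 := normC0 a b g with hG0d
  set F1 := normC0 a b (derivWithin f (Icc a b)) with hF1d
  set G1 := normC0 a b (derivWithin g (Icc a b)) with hG1d
  set F2 := normC0 a b (derivWithin (derivWithin f (Icc a b)) (Icc a b)) with hF2d
  set G2 := normC0 a b (derivWithin (derivWithin g (Icc a b)) (Icc a b)) with hG2d
  set F := normC2 a b f with hFd
  set G := normC2 a b g with hGd
  have hFeq : F = F0 + F1 + F2 := rfl
  have hGeq : G = G0 + G1 + G2 := rfl
  have hF0n : 0 ≤ F0 := normC0_nonneg a b _
  have hG0n : 0 ≤ G0 := normC0_nonneg a b _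
  have hF1n : 0 ≤ F1 := normC0_nonneg a b _
  have hG1n : 0 ≤ G1 := normC0_nonneg a b _
  have hF2n : 0 ≤ F2 := normC0_nonneg a b _
  have hG2n : 0 ≤ G2 := normC0_nonneg a b _
  have hFpos : 0 < F := lt_of_le_of_ne (normC2_nonneg a b f) (Ne.symm hFne)
  have hGpos : 0 < G := lt_of_le_of_ne (normC2_nonneg a b g) (Ne.symm hGne)
  have hF0F : F0 ≤ F := by rw [hFeq]; linarith
  have hG0G : G0 ≤ G := by rw [hGeq]; linarith
  set sf := Real.sqrt (F0 / F) with hsfd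
  set sg := Real.sqrt (G0 / G) with hsgd
  have hsfn : 0 ≤ sf := Real.sqrt_nonneg _
  have hsgn : 0 ≤ sg := Real.sqrt_nonneg _
  have hsf1 : sf ≤ 1 := Real.sqrt_le_one.mpr ((div_le_one hFpos).mpr hF0F)
  have hsg1 : sg ≤ 1 := Real.sqrt_le_one.mpr ((div_le_one hGpos).mpr hG0G)
  have hsfsq : sf ^ 2 = F0 / F := Real.sq_sqrt (by positivity)
  have hsgsq : sg ^ 2 = G0 / G := Real.sq_sqrt (by positivity)
  have hA : F0 ≤ F * sf := by
    have h1 : F0 / F ≤ sf := by nlinarith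
    calc F0 = F * (F0 / F) := by field_simp
      _ ≤ F * sf := mul_le_mul_of_nonneg_left h1 hFpos.le
  have hB : G0 ≤ G * sg := by
    have h1 : G0 / G ≤ sg := by nlinarith
    calc G0 = G * (G0 / G) := by field_simp
      _ ≤ G * sg := mul_le_mul_of_nonneg_left h1 hGpos.le
  -- Landau
  have hsqF : Real.sqrt (F0 * F) = F * sf := by
    rw [hsfd, Real.sqrt_div hF0n, Real.sqrt_mul hF0n]
    have hsF : Real.sqrt F * Real.sqrt F = F := Real.mul_self_sqrt hFpos.le
    have hsFne : Real.sqrt F ≠ 0 := ne_of_gt (Real.sqrt_pos.mpr hFpos)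
    field_simp
    linear_combination Real.sqrt F0 * hsF
  have hsqG : Real.sqrt (G0 * G) = G * sg := by
    rw [hsgd, Real.sqrt_div hG0n, Real.sqrt_mul hG0n]
    have hsG : Real.sqrt G * Real.sqrt G = G := Real.mul_self_sqrt hGpos.le
    have hsGne : Real.sqrt G ≠ 0 := ne_of_gt (Real.sqrt_pos.mpr hGpos)
    field_simp
    linear_combination Real.sqrt G0 * hsG
  have hLf : F1 ≤ K * (F * sf) := by
    have := landau hab hf
    rw [hsqF] at this
    exact this
  have hLg : G1 ≤ K * (G * sg) := by
    have := landau hab hg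
    rw [hsqG] at this
    exact this
  have hmul := normC2_mul_le hab hf hg
  have h1 : F * G0 ≤ F * G * sg := by
    rw [mul_assoc]; exact mul_le_mul_of_nonneg_left hB hFpos.le
  have h2 : F0 * G ≤ F * G * sf := by
    calc F0 * G ≤ F * sf * G := mul_le_mul_of_nonneg_right hA hGpos.le
      _ = F * G * sf := by ring
  have h3 : F1 * G1 ≤ K ^ 2 * (F * G) * (sf * sg) := by
    calc F1 * G1 ≤ (K * (F * sf)) * (K * (G * sg)) :=
          mul_le_mul hLf hLg hG1n (by positivity)
      _ = K ^ 2 * (F * G) * (sf * sg) := by ring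
  have h4 : K ^ 2 * (F * G) * (sf * sg) ≤ K ^ 2 * (F * G) * sf := by
    apply mul_le_mul_of_nonneg_left _ (by positivity)
    nlinarith
  have hnn1 : 0 ≤ F * G * sg := by positivity
  have hnn2 : 0 ≤ F * G * sf := by positivity
  have hnn3 : 0 ≤ K ^ 2 * (F * G) * sg := by positivity
  have hexp : (1 + 2 * K ^ 2) * F * G * (sf + sg) =
      F * G * sf + F * G * sg + 2 * (K ^ 2 * (F * G) * sf) + 2 * (K ^ 2 * (F * G) * sg) := by
    ring
  rw [hexp]
  linarith [hmul, h1, h2, h3, h4, hnn3]
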